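/- Let n ≥ 1, let μ = (-1)^n, and let Δ_n be the n×n complex matrix with (i,j) entry μ^i·(−μ)^{j−1}·C(j−1, n−i) for 1 ≤ i, j ≤ n. Then for every integer ℓ with 0 ≤ ℓ ≤ n, the identity (Δ_n · J_n(μ)^ℓ)ᵀ = −Δ_n · J_n(μ)^{n−ℓ} holds. -/

import Mathlib

open Matrix BigOperators Finset

noncomputable section

/-- The `n × n` upper-triangular Jordan block with eigenvalue `μ`:
`μ` on the diagonal, `1` on the first superdiagonal, `0` elsewhere. -/
def Jmat (n : ℕ) (μ : ℂ) : Matrix (Fin n) (Fin n) ℂ :=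
  Matrix.of fun i j => if i = j then μ else if (j : ℕ) = (i : ℕ) + 1 then 1 else 0

/-- The Pascal-type matrix `Δ_n`, whose 1-based `(i,j)` entry is
`μ^i * (−μ)^(j−1) * C(j−1, n−i)` (here indices are 0-based, so shifted by one). -/
def Delta (n : ℕ) (μ : ℂ) : Matrix (Fin n) (Fin n) ℂ :=
  Matrix.of fun i j =>
    μ ^ ((i : ℕ) + 1) * (-μ) ^ (j : ℕ) * ((j : ℕ).choose (n - ((i : ℕ) + 1)) : ℂ)

/-- The `2n × 2n` block matrix `H_{2n}(μ) = [[0, I],[J_n(μ), 0]]`. -/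
def Hmat (n : ℕ) (μ : ℂ) : Matrix (Fin n ⊕ Fin n) (Fin n ⊕ Fin n) ℂ :=
  Matrix.fromBlocks 0 1 (Jmat n μ) 0

/-- The `n × n` reversed identity matrix: `1` on the antidiagonal, `0` elsewhere. -/
def Rev (n : ℕ) : Matrix (Fin n) (Fin n) ℂ :=
  Matrix.of fun i j => if j = i.rev then 1 else 0

namespace Stmt3Aux

lemma neg_one_pow_congr {a b : ℕ} (h : a % 2 = b % 2) : ((-1:ℂ))^a = (-1)^b := by
  rw [neg_one_pow_eq_pow_mod_two, h, ← neg_one_pow_eq_pow_mod_two]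

lemma alt_partial (n : ℕ) (hn : 1 ≤ n) (k : ℕ) :
    ∑ r ∈ range (k+1), (-1:ℂ)^r * (n.choose r : ℂ) = (-1)^k * ((n-1).choose k : ℂ) := by
  obtain ⟨m, rfl⟩ : ∃ m, n = m + 1 := ⟨n-1, by omega⟩
  simp only [Nat.add_sub_cancel]
  induction k with
  | zero => simp
  | succ k ih =>
    rw [Finset.sum_range_succ, ih, Nat.choose_succ_succ]
    push_cast; ring

lemma key (n : ℕ) : ∀ k a : ℕ, a < n → k < n →
    ∑ j ∈ range (k+1), (-1:ℂ)^j * (j.choose a : ℂ) * (n.choose (k-j) : ℂ)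
      = (-1)^a * ((n-1-a).choose (n-1-k) : ℂ) := by
  intro k
  induction k with
  | zero =>
    intro a ha hk
    rw [Finset.sum_range_one]
    rcases Nat.eq_zero_or_pos a with rfl | hpos
    · simp [Nat.choose_self]
    · rw [Nat.choose_eq_zero_of_lt hpos,
        Nat.choose_eq_zero_of_lt (show n-1-a < n-1-0 by omega)]
      simp
  | succ k ih =>
    intro a ha hk
    rcases Nat.eq_zero_or_pos a with rfl | hpos
    · have hpt : ∀ j ∈ range (k+2),
          (-1:ℂ)^j * (j.choose 0 : ℂ) * (n.choose (k+1-j) : ℂ)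
          = (-1:ℂ)^(k+1) * ((-1:ℂ)^(k+1-j) * (n.choose (k+1-j) : ℂ)) := by
        intro j hj
        simp only [Finset.mem_range] at hj
        have hs : (-1:ℂ)^(k+1) * (-1)^(k+1-j) = (-1)^j := by
          rw [← pow_add, show k+1+(k+1-j) = j + 2*(k+1-j) from by omega,
            pow_add, pow_mul, neg_one_sq, one_pow, mul_one]
        rw [← hs, Nat.choose_zero_right]
        push_cast; ring
      rw [Finset.sum_congr rfl hpt, ← Finset.mul_sum]
      rw [show (∑ j ∈ range (k+2), (-1:ℂ)^(k+1-j) * (n.choose (k+1-j):ℂ))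
            = ∑ r ∈ range (k+2), (-1:ℂ)^r * (n.choose r : ℂ) from
        Finset.sum_nbij' (fun j => k+1-j) (fun r => k+1-r)
          (by intro a ha; simp at ha ⊢; omega)
          (by intro a ha; simp at ha ⊢; omega)
          (by intro a ha; simp at ha ⊢; omega)
          (by intro a ha; simp at ha ⊢; omega)
          (by intro a ha; rfl)]
      rw [alt_partial n (by omega) (k+1)]
      rw [show (n-1).choose (k+1) = (n-1-0).choose (n-1-(k+1)) from by
        rw [← Nat.choose_symm (show k+1 ≤ n-1 by omega)]; norm_num]
      rw [← mul_assoc, ← pow_add, show (k+1)+(k+1) = 2*(k+1) from by ring,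
        pow_mul, neg_one_sq, one_pow, one_mul, pow_zero, one_mul]
    · obtain ⟨b, rfl⟩ : ∃ b, a = b + 1 := ⟨a-1, by omega⟩
      rw [Finset.sum_range_succ']
      have hpt : ∀ i ∈ range (k+1),
          (-1:ℂ)^(i+1) * ((i+1).choose (b+1):ℂ) * (n.choose (k+1-(i+1)):ℂ)
          = -((-1:ℂ)^i * (i.choose (b+1):ℂ) * (n.choose (k-i):ℂ))
            + -((-1:ℂ)^i * (i.choose b:ℂ) * (n.choose (k-i):ℂ)) := by
        intro i hi
        rw [Nat.choose_succ_succ, show k+1-(i+1) = k-i from by omega]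
        push_cast; ring
      rw [Finset.sum_congr rfl hpt, Finset.sum_add_distrib,
        Finset.sum_neg_distrib, Finset.sum_neg_distrib,
        ih (b+1) (by omega) (by omega), ih b (by omega) (by omega),
        Nat.choose_eq_zero_of_lt (Nat.succ_pos b)]
      have hb : n-1-b = (n-1-(b+1))+1 := by omega
      have hk2 : n-1-k = (n-1-(k+1))+1 := by omega
      rw [hb, hk2, Nat.choose_succ_succ]
      push_cast; ring

variable {n : ℕ} {μ : ℂ}

lemma mul_J_succ (A : Matrix (Fin n) (Fin n) ℂ) (i k k' : Fin n) (h : (k:ℕ) = (k':ℕ)+1) :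
    (A * Jmat n μ) i k = μ * A i k + A i k' := by
  rw [Matrix.mul_apply]
  have hpt : ∀ j : Fin n, A i j * Jmat n μ j k
      = (if j = k then μ * A i j else 0) + (if j = k' then A i j else 0) := by
    intro j
    simp only [Jmat, Matrix.of_apply, Fin.ext_iff]
    split_ifs with h1 h2 h3 h4 h5 <;> first | (exfalso; omega) | ring
  rw [Finset.sum_congr rfl (fun j _ => hpt j), Finset.sum_add_distrib,
    Finset.sum_ite_eq' Finset.univ k, Finset.sum_ite_eq' Finset.univ k']
  simp

lemma mul_J_zero (A : Matrix (Fin n) (Fin n) ℂ) (i k : Fin n) (h : (k:ℕ) = 0) :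
    (A * Jmat n μ) i k = μ * A i k := by
  rw [Matrix.mul_apply]
  have hpt : ∀ j : Fin n, A i j * Jmat n μ j k
      = (if j = k then μ * A i j else 0) := by
    intro j
    simp only [Jmat, Matrix.of_apply, Fin.ext_iff]
    split_ifs with h1 h2 <;> first | (exfalso; omega) | ring
  rw [Finset.sum_congr rfl (fun j _ => hpt j), Finset.sum_ite_eq' Finset.univ k]
  simp

lemma Jt_mul_succ (A : Matrix (Fin n) (Fin n) ℂ) (i i' k : Fin n) (h : (i:ℕ) = (i':ℕ)+1) :
    ((Jmat n μ)ᵀ * A) i k = μ * A i k + A i' k := by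
  rw [Matrix.mul_apply]
  have hpt : ∀ j : Fin n, (Jmat n μ)ᵀ i j * A j k
      = (if j = i then μ * A j k else 0) + (if j = i' then A j k else 0) := by
    intro j
    simp only [Jmat, Matrix.transpose_apply, Matrix.of_apply, Fin.ext_iff]
    split_ifs with h1 h2 h3 h4 h5 <;> first | (exfalso; omega) | ring
  rw [Finset.sum_congr rfl (fun j _ => hpt j), Finset.sum_add_distrib,
    Finset.sum_ite_eq' Finset.univ i, Finset.sum_ite_eq' Finset.univ i']
  simp

lemma Jt_mul_zero (A : Matrix (Fin n) (Fin n) ℂ) (i k : Fin n) (h : (i:ℕ) = 0) :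
    ((Jmat n μ)ᵀ * A) i k = μ * A i k := by
  rw [Matrix.mul_apply]
  have hpt : ∀ j : Fin n, (Jmat n μ)ᵀ i j * A j k
      = (if j = i then μ * A j k else 0) := by
    intro j
    simp only [Jmat, Matrix.transpose_apply, Matrix.of_apply, Fin.ext_iff]
    split_ifs with h1 h2 <;> first | (exfalso; omega) | ring
  rw [Finset.sum_congr rfl (fun j _ => hpt j), Finset.sum_ite_eq' Finset.univ i]
  simp

lemma Jpow (hμ2 : μ * μ = 1) : ∀ (ℓ : ℕ) (i k : Fin n),
    ((Jmat n μ)^ℓ) i k = if (i:ℕ) ≤ (k:ℕ) then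
      μ^(ℓ + ((k:ℕ)-(i:ℕ))) * ((ℓ.choose ((k:ℕ)-(i:ℕ))):ℂ) else 0 := by
  have hsq : μ^2 = 1 := by rw [sq]; exact hμ2
  intro ℓ
  induction ℓ with
  | zero =>
    intro i k
    rw [pow_zero, Matrix.one_apply]
    simp only [Fin.ext_iff]
    split_ifs with h1 h2 h3
    · rw [show (k:ℕ)-(i:ℕ) = 0 from by omega]; simp
    · exfalso; omega
    · rw [show (k:ℕ)-(i:ℕ) = ((k:ℕ)-(i:ℕ)-1)+1 from by omega, Nat.choose_zero_succ]
      simp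
    · rfl
  | succ ℓ ih =>
    intro i k
    rw [pow_succ]
    rcases Nat.eq_zero_or_pos (k:ℕ) with hk0 | hk1
    · rw [mul_J_zero _ i k hk0, ih]
      split_ifs with h1
      · rw [show (k:ℕ)-(i:ℕ) = 0 from by omega]
        simp only [Nat.choose_zero_right, Nat.cast_one, mul_one, add_zero]
        ring
      · ring
    · have hk'lt : (k:ℕ) - 1 < n := by omega
      set k' : Fin n := ⟨(k:ℕ)-1, hk'lt⟩ with hk'd
      have hcv : (k':ℕ) = (k:ℕ)-1 := rfl
      have hkk : (k:ℕ) = (k':ℕ)+1 := by omega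
      rw [mul_J_succ _ i k k' hkk, ih, ih]
      split_ifs with h1 h2 h3
      · have hd : (k:ℕ)-(i:ℕ) = ((k':ℕ)-(i:ℕ))+1 := by omega
        rw [hd, Nat.choose_succ_succ]
        push_cast
        linear_combination (-(μ^(ℓ + ((k':ℕ)-(i:ℕ))) * ((ℓ.choose ((k':ℕ)-(i:ℕ))):ℂ))) * hsq
      · rw [show (k:ℕ)-(i:ℕ) = 0 from by omega]
        simp only [Nat.choose_zero_right, Nat.cast_one, mul_one, add_zero]
        ring
      · exfalso; omega
      · ring

lemma JtDJ (hn : 1 ≤ n) (hμ1 : μ = 1 ∨ μ = -1) :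
    (Jmat n μ)ᵀ * (Delta n μ * Jmat n μ) = Delta n μ := by
  have hμ2 : μ * μ = 1 := by rcases hμ1 with rfl | rfl <;> norm_num
  have hsq : μ^2 = 1 := by rw [sq]; exact hμ2
  ext i k
  have hkn := k.isLt
  have hin := i.isLt
  rcases Nat.eq_zero_or_pos (i:ℕ) with hi0 | hi1
  · rw [Jt_mul_zero _ i k hi0]
    rcases Nat.eq_zero_or_pos (k:ℕ) with hk0 | hk1
    · rw [mul_J_zero _ i k hk0]
      linear_combination (Delta n μ i k) * hsq
    · have hk'lt : (k:ℕ) - 1 < n := by omega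
      set k' : Fin n := ⟨(k:ℕ)-1, hk'lt⟩ with hk'd
      have hcv : (k':ℕ) = (k:ℕ)-1 := rfl
      have hkk : (k:ℕ) = (k':ℕ)+1 := by omega
      rw [mul_J_succ _ i k k' hkk]
      have hz : Delta n μ i k' = 0 := by
        simp only [Delta, Matrix.of_apply]
        rw [show ((k':ℕ).choose (n - ((i:ℕ)+1))) = 0 from
          Nat.choose_eq_zero_of_lt (by omega)]
        simp
      rw [hz]
      linear_combination (Delta n μ i k) * hsq
  · have hi'lt : (i:ℕ) - 1 < n := by omega
    set i' : Fin n := ⟨(i:ℕ)-1, hi'lt⟩ with hi'd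
    have hcvi : (i':ℕ) = (i:ℕ)-1 := rfl
    have hii : (i:ℕ) = (i':ℕ)+1 := by omega
    rw [Jt_mul_succ _ i i' k hii]
    rcases Nat.eq_zero_or_pos (k:ℕ) with hk0 | hk1
    · rw [mul_J_zero _ i k hk0, mul_J_zero _ i' k hk0]
      have hz : Delta n μ i' k = 0 := by
        simp only [Delta, Matrix.of_apply]
        rw [hk0, show (Nat.choose 0 (n - ((i':ℕ)+1))) = 0 from
          Nat.choose_eq_zero_of_lt (by omega)]
        simp
      rw [hz]
      linear_combination (Delta n μ i k) * hsq
    · have hk'lt : (k:ℕ) - 1 < n := by omega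
      set k' : Fin n := ⟨(k:ℕ)-1, hk'lt⟩ with hk'd
      have hcv : (k':ℕ) = (k:ℕ)-1 := rfl
      have hkk : (k:ℕ) = (k':ℕ)+1 := by omega
      rw [mul_J_succ _ i k k' hkk, mul_J_succ _ i' k k' hkk]
      simp only [Delta, Matrix.of_apply]
      rw [hii, hkk]
      obtain ⟨m, hm⟩ : ∃ m, n - ((i':ℕ)+1) = m + 1 := ⟨n - (i':ℕ) - 2, by omega⟩
      have hm2 : n - ((i':ℕ)+1+1) = m := by omega
      rw [hm, hm2, Nat.choose_succ_succ]
      rcases hμ1 with rfl | rfl <;> push_cast <;> ring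

lemma DeltaT (hn : 1 ≤ n) (hμ : μ = (-1)^n) :
    (Delta n μ)ᵀ = -(Delta n μ * (Jmat n μ)^n) := by
  have hμ2 : μ * μ = 1 := by
    rw [hμ, ← pow_add, show n + n = 2*n from by ring, pow_mul, neg_one_sq, one_pow]
  ext i k
  have hkn := k.isLt
  have hin := i.isLt
  rw [Matrix.transpose_apply, Matrix.neg_apply, Matrix.mul_apply]
  have hpt : ∀ j : Fin n, Delta n μ i j * ((Jmat n μ)^n) j k
      = μ^((i:ℕ)+1+n+(k:ℕ)) *
        (if (j:ℕ) ≤ (k:ℕ) then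
          (-1:ℂ)^(j:ℕ) * (((j:ℕ).choose (n-1-(i:ℕ))):ℂ) * ((n.choose ((k:ℕ)-(j:ℕ))):ℂ)
         else 0) := by
    intro j
    rw [Jpow hμ2 n j k]
    rcases le_or_gt (j:ℕ) (k:ℕ) with hj | hj
    · rw [if_pos hj, if_pos hj]
      simp only [Delta, Matrix.of_apply]
      rw [show n - ((i:ℕ)+1) = n-1-(i:ℕ) from by omega]
      rcases mul_self_eq_one_iff.mp hμ2 with h1 | h1 <;> rw [h1]
      · push_cast; ring
      · have hx : ((-1:ℂ))^(n + ((k:ℕ)-(j:ℕ))) = (-1)^(n + (k:ℕ) + (j:ℕ)) :=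
          neg_one_pow_congr (by omega)
        push_cast
        rw [hx]
        ring
    · rw [if_neg (by omega), if_neg (by omega), mul_zero, mul_zero]
  rw [Finset.sum_congr rfl (fun j _ => hpt j), ← Finset.mul_sum]
  rw [Fin.sum_univ_eq_sum_range (fun j => if j ≤ (k:ℕ) then
    (-1:ℂ)^j * ((j.choose (n-1-(i:ℕ))):ℂ) * ((n.choose ((k:ℕ)-j)):ℂ) else 0) n]
  rw [← Finset.sum_subset (show range ((k:ℕ)+1) ⊆ range n from by
        intro x hx; simp at hx ⊢; omega)
      (fun x _ hx => if_neg (by simp at hx; omega))]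
  rw [Finset.sum_congr rfl (fun j hj => if_pos (by simp at hj; omega))]
  rw [key n (k:ℕ) (n-1-(i:ℕ)) (by omega) (by omega)]
  rw [show n-1-(n-1-(i:ℕ)) = (i:ℕ) from by omega]
  simp only [Delta, Matrix.of_apply]
  rw [show n - ((k:ℕ)+1) = n-1-(k:ℕ) from by omega]
  rcases Nat.even_or_odd n with he | ho
  · have h1 : μ = 1 := by rw [hμ, he.neg_one_pow]
    have he2 := Nat.even_iff.mp he
    rw [h1]
    rw [show ((-(1:ℂ)))^(i:ℕ) = (-1:ℂ)^(i:ℕ) from rfl]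
    rw [show ((-1:ℂ))^(n-1-(i:ℕ)) = (-1:ℂ)^((i:ℕ)+1) from neg_one_pow_congr (by omega)]
    push_cast; ring
  · have h1 : μ = -1 := by rw [hμ, ho.neg_one_pow]
    have ho2 := Nat.odd_iff.mp ho
    rw [h1]
    have hx : ((-1:ℂ))^((i:ℕ)+1+n+(k:ℕ)) * ((-1:ℂ))^(n-1-(i:ℕ)) = (-1:ℂ)^(k:ℕ) := by
      rw [← pow_add]
      exact neg_one_pow_congr (by omega)
    push_cast
    linear_combination ((((i:ℕ).choose (n-1-(k:ℕ))):ℂ)) * hx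

end Stmt3Aux

open Stmt3Aux in
/-- `(Δ_n · J_n(μ)^ℓ)ᵀ = −Δ_n · J_n(μ)^(n−ℓ)` for `0 ≤ ℓ ≤ n`, `μ = (-1)^n`. -/
theorem stmt_3 (n : ℕ) (hn : 1 ≤ n) (μ : ℂ) (hμ : μ = (-1) ^ n) :
    ∀ ℓ : ℕ, ℓ ≤ n →
      (Delta n μ * (Jmat n μ) ^ ℓ)ᵀ = -(Delta n μ * (Jmat n μ) ^ (n - ℓ)) := by
  have hμ1 : μ = 1 ∨ μ = -1 := by
    rcases Nat.even_or_odd n with he | ho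
    · left; rw [hμ, he.neg_one_pow]
    · right; rw [hμ, ho.neg_one_pow]
  have hB := JtDJ hn hμ1
  have hA := DeltaT hn hμ
  intro ℓ
  induction ℓ with
  | zero =>
    intro _
    simpa using hA
  | succ ℓ ih =>
    intro hle
    have h1 := ih (by omega)
    have hsub : n - ℓ = (n - (ℓ+1)) + 1 := by omega
    rw [pow_succ, ← Matrix.mul_assoc, Matrix.transpose_mul, h1, Matrix.mul_neg, neg_inj,
      hsub, pow_succ', ← Matrix.mul_assoc (Delta n μ), ← Matrix.mul_assoc, hB]
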